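/- Let q > p > 2 and let V ∈ C([0,1]) ∩ C^2((0,1)) be a nonnegative solution on (0,1) of (|V'|^{p-2}V')' + |V'|^q = 0 with V(0) = 0 and V(1) = M. Then M ≤ M_b, where M_b = ((q-p+1)/(q-p)) · ((q-p+1)/(p-1))^{-1/(q-p+1)}. In particular no such solution exists if M > M_b. -/

import Mathlib

open Set Filter

lemma phi_hasDerivAt {a : ℝ} (ha : 0 < a) (t : ℝ) :
    HasDerivAt (fun s : ℝ => |s| ^ a * s) ((a + 1) * |t| ^ a) t := by
  rcases lt_trichotomy t 0 with ht | ht | ht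
  · have h2 : HasDerivAt (fun s : ℝ => (-s) ^ (a + 1)) ((a + 1) * (-t) ^ a * (-1)) t := by
      have h3 := (Real.hasDerivAt_rpow_const (x := -t) (p := a + 1)
        (Or.inl (by linarith))).comp t (hasDerivAt_neg t)
      rw [show a + 1 - 1 = a by ring] at h3
      exact h3
    have h1 : HasDerivAt (fun s : ℝ => -((-s) ^ (a + 1))) ((a + 1) * (-t) ^ a) t := by
      have h2n := h2.neg
      simp only [mul_neg, mul_one, neg_neg] at h2n
      exact h2n
    have heq : (fun s : ℝ => |s| ^ a * s) =ᶠ[nhds t] (fun s : ℝ => -((-s) ^ (a + 1))) := by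
      filter_upwards [Iio_mem_nhds ht] with s hs
      have hs' : (-s : ℝ) ≠ 0 := by simp only [mem_Iio] at hs; intro h; nlinarith [neg_pos.2 hs]
      rw [abs_of_neg (by simpa using hs), Real.rpow_add_one hs']
      ring
    have := h1.congr_of_eventuallyEq heq
    simpa [abs_of_neg ht] using this
  · subst ht
    have h0 : (a + 1) * |(0:ℝ)| ^ a = 0 := by
      simp [Real.zero_rpow (ne_of_gt ha)]
    rw [h0, hasDerivAt_iff_tendsto_slope]
    have htend : Tendsto (fun s : ℝ => |s| ^ a) (nhds 0) (nhds 0) := by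
      have hc : ContinuousAt (fun s : ℝ => |s| ^ a) 0 :=
        (Real.continuousAt_rpow_const _ _ (Or.inr ha.le)).comp continuous_abs.continuousAt
      simpa [Real.zero_rpow (ne_of_gt ha)] using hc.tendsto
    refine Tendsto.congr' ?_ (htend.mono_left nhdsWithin_le_nhds)
    filter_upwards [self_mem_nhdsWithin] with s hs
    have hs' : s ≠ 0 := hs
    rw [slope_def_field]
    field_simp
    simp
  · have h2 : HasDerivAt (fun s : ℝ => s ^ (a + 1)) ((a + 1) * t ^ a) t := by
      have h3 := Real.hasDerivAt_rpow_const (x := t) (p := a + 1) (Or.inl (ne_of_gt ht))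
      convert h3 using 1
      rw [show a + 1 - 1 = a by ring]
    have heq : (fun s : ℝ => |s| ^ a * s) =ᶠ[nhds t] (fun s : ℝ => s ^ (a + 1)) := by
      filter_upwards [Ioi_mem_nhds ht] with s hs
      rw [abs_of_pos hs, Real.rpow_add_one (ne_of_gt hs)]
    have := h2.congr_of_eventuallyEq heq
    simpa [abs_of_pos ht] using this

theorem stmt_3 (p q M Mb : ℝ) (hp : 2 < p) (hq : p < q) (hM : 0 ≤ M)
    (hMb : Mb = ((q - p + 1) / (q - p)) * ((q - p + 1) / (p - 1)) ^ (-(1 / (q - p + 1))))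
    (V : ℝ → ℝ)
    (hVcont : ContinuousOn V (Set.Icc 0 1))
    (hVC2 : ContDiffOn ℝ 2 V (Set.Ioo 0 1))
    (hVnonneg : ∀ x ∈ Set.Icc (0 : ℝ) 1, 0 ≤ V x)
    (heq : ∀ x ∈ Set.Ioo (0 : ℝ) 1,
      deriv (fun y => |deriv V y| ^ (p - 2) * deriv V y) x + |deriv V x| ^ q = 0)
    (hV0 : V 0 = 0) (hV1 : V 1 = M) :
    M ≤ Mb := by
  set α : ℝ := q - p + 1 with hαdef
  have hα1 : 1 < α := by rw [hαdef]; linarith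
  have hαpos : 0 < α := by linarith
  set c : ℝ := α / (p - 1) with hcdef
  have hcpos : 0 < c := div_pos hαpos (by linarith)
  set r : ℝ := -(1 / α) with hrdef
  have hr0 : r < 0 := by rw [hrdef]; simp; positivity
  have hrgt : -1 < r := by
    rw [hrdef]
    have : 1 / α < 1 := by
      rw [div_lt_one hαpos]; exact hα1
    linarith
  have hr1 : 0 < r + 1 := by linarith
  -- basic differentiability
  have hdV : ∀ x ∈ Ioo (0:ℝ) 1, HasDerivAt V (deriv V x) x := by
    intro x hx
    exact ((hVC2.differentiableOn (by norm_num)).differentiableAt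
      (isOpen_Ioo.mem_nhds hx)).hasDerivAt
  have hC1 : ContDiffOn ℝ 1 (deriv V) (Ioo 0 1) := by
    exact hVC2.deriv_of_isOpen isOpen_Ioo (show (1:WithTop ℕ∞) + 1 ≤ 2 by norm_num)
  have hdV' : ∀ x ∈ Ioo (0:ℝ) 1, HasDerivAt (deriv V) (deriv (deriv V) x) x := by
    intro x hx
    exact ((hC1.differentiableOn one_ne_zero).differentiableAt
      (isOpen_Ioo.mem_nhds hx)).hasDerivAt
  have hcontV' : ContinuousOn (deriv V) (Ioo 0 1) := hC1.continuousOn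
  set w : ℝ → ℝ := fun y => |deriv V y| ^ (p - 2) * deriv V y with hwdef
  have hp2 : (0:ℝ) < p - 2 := by linarith
  have hwder : ∀ x ∈ Ioo (0:ℝ) 1,
      HasDerivAt w ((p - 1) * |deriv V x| ^ (p - 2) * deriv (deriv V) x) x := by
    intro x hx
    have h := (phi_hasDerivAt hp2 (deriv V x)).comp x (hdV' x hx)
    have h2 : HasDerivAt w ((p - 2 + 1) * |deriv V x| ^ (p - 2) * deriv (deriv V) x) x := by
      exact h
    have h3 : p - 2 + 1 = p - 1 := by ring
    rwa [h3] at h2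
  have hderiv_w : ∀ x ∈ Ioo (0:ℝ) 1,
      deriv w x = (p - 1) * |deriv V x| ^ (p - 2) * deriv (deriv V) x :=
    fun x hx => (hwder x hx).deriv
  have heqw : ∀ x ∈ Ioo (0:ℝ) 1, deriv w x = -(|deriv V x| ^ q) := by
    intro x hx
    have := heq x hx
    linarith
  have hwanti : AntitoneOn w (Ioo 0 1) := by
    apply antitoneOn_of_deriv_nonpos (convex_Ioo 0 1)
    · exact fun x hx => (hwder x hx).continuousAt.continuousWithinAt
    · rw [interior_Ioo]
      exact fun x hx => (hwder x hx).differentiableAt.differentiableWithinAt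
    · rw [interior_Ioo]
      intro x hx
      rw [heqw x hx]
      have : (0:ℝ) ≤ |deriv V x| ^ q := Real.rpow_nonneg (abs_nonneg _) q
      linarith
  have key : ∀ x ∈ Ioo (0:ℝ) 1, deriv V x ≤ c ^ r * x ^ r := by
    intro x hx
    obtain ⟨hx0, hx1⟩ := hx
    have hgpos : 0 < c ^ r * x ^ r :=
      mul_pos (Real.rpow_pos_of_pos hcpos r) (Real.rpow_pos_of_pos hx0 r)
    rcases le_or_gt (deriv V x) 0 with hux | hux
    · linarith
    have hupos : ∀ t ∈ Ioc (0:ℝ) x, 0 < deriv V t := by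
      rintro t ⟨ht0, htx⟩
      have hwx : 0 < w x := by
        have : 0 < |deriv V x| ^ (p - 2) := Real.rpow_pos_of_pos (abs_pos.2 (ne_of_gt hux)) _
        exact mul_pos this hux
      have hle : w x ≤ w t :=
        hwanti ⟨ht0, lt_of_le_of_lt htx hx1⟩ ⟨hx0, hx1⟩ htx
      by_contra hcon
      push_neg at hcon
      have : w t ≤ 0 :=
        mul_nonpos_of_nonneg_of_nonpos (Real.rpow_nonneg (abs_nonneg _) _) hcon
      linarith
    have hhder : ∀ s ∈ Ioc (0:ℝ) x, HasDerivAt (fun y => (deriv V y) ^ (-α)) c s := by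
      intro s hs
      have hus : 0 < deriv V s := hupos s hs
      have hsIoo : s ∈ Ioo (0:ℝ) 1 := ⟨hs.1, lt_of_le_of_lt hs.2 hx1⟩
      have habs : |deriv V s| = deriv V s := abs_of_pos hus
      have hCpos : 0 < (deriv V s) ^ (p - 2) := Real.rpow_pos_of_pos hus _
      have hpne : p - 1 ≠ 0 := by linarith
      have hne : ((p - 1) * (deriv V s) ^ (p - 2) : ℝ) ≠ 0 :=
        mul_ne_zero hpne (ne_of_gt hCpos)
      have h1 : (p - 1) * (deriv V s) ^ (p - 2) * deriv (deriv V) s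
          = -((deriv V s) ^ q) := by
        have h2 := heqw s hsIoo
        rw [hderiv_w s hsIoo, habs] at h2
        exact h2
      have hu' : deriv (deriv V) s
          = -((deriv V s) ^ q) / ((p - 1) * (deriv V s) ^ (p - 2)) := by
        rw [eq_div_iff hne]
        linarith [h1]
      have hcomp := (Real.hasDerivAt_rpow_const (x := deriv V s) (p := -α)
        (Or.inl (ne_of_gt hus))).comp s (hdV' s hsIoo)
      have hmerge : (deriv V s) ^ (-α - 1) * (deriv V s) ^ q = (deriv V s) ^ (p - 2) := by
        rw [← Real.rpow_add hus]
        congr 1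
        rw [hαdef]; ring
      have hval : -α * (deriv V s) ^ (-α - 1) * deriv (deriv V) s = c := by
        rw [hu', hcdef]
        field_simp
        linear_combination hmerge
      have hres := hcomp
      rw [Function.comp_def] at hres
      rw [hval] at hres
      exact hres
    have step : ∀ t ∈ Ioo (0:ℝ) x, c * (x - t) ≤ (deriv V x) ^ (-α) := by
      intro t ht
      obtain ⟨z, hz, hzeq⟩ := exists_hasDerivAt_eq_slope
        (fun y => (deriv V y) ^ (-α)) (fun _ => c) ht.2
        (fun s hs => (hhder s ⟨lt_of_lt_of_le ht.1 hs.1, hs.2⟩).continuousAt.continuousWithinAt)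
        (fun s hs => hhder s ⟨lt_trans ht.1 hs.1, hs.2.le⟩)
      have hxt : 0 < x - t := sub_pos.2 ht.2
      have heq2 : c * (x - t) = (deriv V x) ^ (-α) - (deriv V t) ^ (-α) := by
        rw [hzeq, div_mul_cancel₀ _ (ne_of_gt hxt)]
      have hht : 0 < (deriv V t) ^ (-α) :=
        Real.rpow_pos_of_pos (hupos t ⟨ht.1, ht.2.le⟩) _
      linarith
    have hhx_ge : c * x ≤ (deriv V x) ^ (-α) := by
      by_contra hcon
      push_neg at hcon
      set δ := c * x - (deriv V x) ^ (-α) with hδdef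
      have hδpos : 0 < δ := by rw [hδdef]; linarith
      have htmem : min (x / 2) (δ / (2 * c)) ∈ Ioo (0:ℝ) x := by
        constructor
        · apply lt_min
          · linarith
          · positivity
        · exact lt_of_le_of_lt (min_le_left _ _) (by linarith)
      have hstep := step _ htmem
      have hctle : c * min (x / 2) (δ / (2 * c)) ≤ δ / 2 := by
        have h1 : min (x / 2) (δ / (2 * c)) ≤ δ / (2 * c) := min_le_right _ _
        calc c * min (x / 2) (δ / (2 * c)) ≤ c * (δ / (2 * c)) := by
              exact mul_le_mul_of_nonneg_left h1 hcpos.le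
          _ = δ / 2 := by field_simp
      have : c * (x - min (x / 2) (δ / (2 * c)))
          = c * x - c * min (x / 2) (δ / (2 * c)) := by ring
      rw [this] at hstep
      linarith
    have hcx : 0 < c * x := mul_pos hcpos hx0
    have h3 := (Real.rpow_le_rpow_iff_of_neg (Real.rpow_pos_of_pos hux (-α)) hcx hr0).2 hhx_ge
    have h4 : ((deriv V x) ^ (-α)) ^ r = deriv V x := by
      rw [← Real.rpow_mul hux.le]
      have : -α * r = 1 := by rw [hrdef]; field_simp
      rw [this, Real.rpow_one]
    rw [h4] at h3
    calc deriv V x ≤ (c * x) ^ r := h3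
      _ = c ^ r * x ^ r := Real.mul_rpow hcpos.le hx0.le
  have hintineq : ∀ ε : ℝ, ε ∈ Ioo (0:ℝ) (1/2) → V (1 - ε) - V ε ≤ Mb := by
    intro ε hε
    obtain ⟨hε0, hε2⟩ := hε
    have hle : ε ≤ 1 - ε := by linarith
    have hsub : Icc ε (1 - ε) ⊆ Ioo (0:ℝ) 1 := fun s hs =>
      ⟨lt_of_lt_of_le hε0 hs.1, lt_of_le_of_lt hs.2 (by linarith)⟩
    have huIcc : uIcc ε (1 - ε) = Icc ε (1 - ε) := uIcc_of_le hle
    have hintg : IntervalIntegrable (deriv V) MeasureTheory.volume ε (1 - ε) := by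
      apply ContinuousOn.intervalIntegrable
      rw [huIcc]
      exact hcontV'.mono hsub
    have hftc : ∫ s in ε..(1 - ε), deriv V s = V (1 - ε) - V ε :=
      intervalIntegral.integral_eq_sub_of_hasDerivAt
        (fun s hs => hdV s (hsub (huIcc ▸ hs))) hintg
    have hintg2 : IntervalIntegrable (fun s : ℝ => c ^ r * s ^ r)
        MeasureTheory.volume ε (1 - ε) := by
      apply ContinuousOn.intervalIntegrable
      rw [huIcc]
      intro s hs
      exact continuousWithinAt_const.mul
        ((Real.continuousAt_rpow_const s r
          (Or.inl (ne_of_gt (lt_of_lt_of_le hε0 hs.1)))).continuousWithinAt)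
    have hmono := intervalIntegral.integral_mono_on hle hintg hintg2
      (fun s hs => key s (hsub hs))
    have hcalc : ∫ s in ε..(1 - ε), c ^ r * s ^ r
        = c ^ r * (((1 - ε) ^ (r + 1) - ε ^ (r + 1)) / (r + 1)) := by
      rw [intervalIntegral.integral_const_mul, integral_rpow (Or.inl hrgt)]
    have hup : ((1 - ε) ^ (r + 1) - ε ^ (r + 1)) / (r + 1) ≤ 1 / (r + 1) := by
      have h1 : (1 - ε) ^ (r + 1) ≤ 1 :=
        Real.rpow_le_one (by linarith) (by linarith) hr1.le
      have h2 : 0 ≤ ε ^ (r + 1) := Real.rpow_nonneg hε0.le _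
      gcongr
      linarith
    have hMb' : Mb = c ^ r * (1 / (r + 1)) := by
      rw [hMb, hcdef, hrdef, hαdef]
      have h1 : q - p ≠ 0 := by linarith
      have h2 : q - p + 1 ≠ 0 := by linarith
      have h3 : -(1 / (q - p + 1)) + 1 = (q - p) / (q - p + 1) := by field_simp; ring
      rw [h3]
      rw [one_div_div]
      ring
    calc V (1 - ε) - V ε = ∫ s in ε..(1 - ε), deriv V s := hftc.symm
      _ ≤ ∫ s in ε..(1 - ε), c ^ r * s ^ r := hmono
      _ = c ^ r * (((1 - ε) ^ (r + 1) - ε ^ (r + 1)) / (r + 1)) := hcalc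
      _ ≤ c ^ r * (1 / (r + 1)) := by
          apply mul_le_mul_of_nonneg_left hup (Real.rpow_nonneg hcpos.le _)
      _ = Mb := hMb'.symm
  have hl1 : Filter.Tendsto (fun ε : ℝ => V ε) (nhdsWithin 0 (Ioi 0)) (nhds 0) := by
    have hcw : ContinuousWithinAt V (Icc 0 1) 0 := hVcont 0 (by norm_num)
    have hmap : Filter.Tendsto (fun ε : ℝ => ε) (nhdsWithin 0 (Ioi 0))
        (nhdsWithin 0 (Icc (0:ℝ) 1)) := by
      apply tendsto_nhdsWithin_of_tendsto_nhds_of_eventually_within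
      · exact tendsto_id.mono_left nhdsWithin_le_nhds
      · filter_upwards [self_mem_nhdsWithin,
          Filter.eventually_iff_exists_mem.2 ⟨Iio 1, nhdsWithin_le_nhds (Iio_mem_nhds one_pos),
            fun y hy => hy⟩] with ε h1 h2
        exact ⟨le_of_lt h1, le_of_lt h2⟩
    have := hcw.tendsto.comp hmap
    rwa [hV0] at this
  have hl2 : Filter.Tendsto (fun ε : ℝ => V (1 - ε)) (nhdsWithin 0 (Ioi 0)) (nhds M) := by
    have hcw : ContinuousWithinAt V (Icc 0 1) 1 := hVcont 1 (by norm_num)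
    have hmap : Filter.Tendsto (fun ε : ℝ => 1 - ε) (nhdsWithin 0 (Ioi 0))
        (nhdsWithin 1 (Icc (0:ℝ) 1)) := by
      apply tendsto_nhdsWithin_of_tendsto_nhds_of_eventually_within
      · have : Filter.Tendsto (fun ε : ℝ => 1 - ε) (nhds 0) (nhds (1 - 0)) :=
          (continuous_const.sub continuous_id).tendsto 0
        simpa using this.mono_left nhdsWithin_le_nhds
      · filter_upwards [self_mem_nhdsWithin,
          Filter.eventually_iff_exists_mem.2 ⟨Iio 1, nhdsWithin_le_nhds (Iio_mem_nhds one_pos),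
            fun y hy => hy⟩] with ε h1 h2
        exact ⟨by linarith [mem_Iio.1 h2], by linarith [mem_Ioi.1 h1]⟩
    have := hcw.tendsto.comp hmap
    rwa [hV1] at this
  have hlim := hl2.sub hl1
  rw [sub_zero] at hlim
  apply le_of_tendsto hlim
  filter_upwards [self_mem_nhdsWithin,
    Filter.eventually_iff_exists_mem.2 ⟨Iio (1/2), nhdsWithin_le_nhds (Iio_mem_nhds (by norm_num)),
      fun y hy => hy⟩] with ε h1 h2
  exact hintineq ε ⟨h1, h2⟩
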